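/- Let S ⊂ ℤ be a finite set and define P^{eo}(S) = {A ⊆ S : for all i, i ∈ A and i even ⟺ i+1 ∈ A and i+1 odd} and P^{oe}(S) = {A ⊆ S : for all i, i ∈ A and i odd ⟺ i+1 ∈ A and i+1 even}. Suppose S = [2t]_c^1 for c = [a_1,...,a_r; b_1,...,b_s; c_0] with c_0 > 1, and decompose each A ∈ P^{eo}(S) as A = A_1 ∪ A_2 ∪ A_3 with A_1 = A ∩ [2l_r − 1], A_2 = A ∩ ([2l_r + 2c_0 − 2] \ [2l_r]), A_3 = A \ [2l_r + 2c_0 − 1], where l_r = a_1+···+a_r. Then the map sending A (in a first copy of P^{eo}(S)) to (A_1 − 1) ∪ (A_2 − 1) ∪ {2l_r + 2c_0 − 3, 2l_r + 2c_0 − 2} ∪ (A_3 + 1), and A (in a second copy) to (A_1 − 1) ∪ (A_2 − 1) ∪ (A_3 + 1), is a bijection from P^{eo}(S) ⊔ P^{eo}(S) onto P^{oe}(S). -/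

import Mathlib

/-- The tuple `[a₁,…,a_r; b₁,…,b_s; c] =
({1}^{2a₁−1},2,…,{1}^{2a_r−1},2,{1}^{2c−2},2,{1}^{2b₁−1},…,2,{1}^{2b_s−1})`. -/
def tupleC (as bs : List ℕ) (c : ℕ) : List ℕ :=
  (as.map fun a => List.replicate (2 * a - 1) 1 ++ [2]).flatten
    ++ List.replicate (2 * c - 2) 1
    ++ (bs.map fun b => 2 :: List.replicate (2 * b - 1) 1).flatten

/-- The set `[2t]_c^{>1}` of (1-based) indices `i` with `c_i > 1`. -/
def idxGt (cs : List ℕ) : Finset ℕ :=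
  (Finset.Icc 1 cs.length).filter fun i => 1 < cs.getD (i - 1) 0

/-- The set `[2t]_c^{1}` of (1-based) indices `i` with `c_i = 1`. -/
def idxOne (cs : List ℕ) : Finset ℕ :=
  (Finset.Icc 1 cs.length).filter fun i => cs.getD (i - 1) 0 = 1

/-- `P^{eo}(S) = {A ⊆ S : i ∈ A and i even ⟺ i+1 ∈ A and i+1 odd}`. -/
def Peo (S : Finset ℕ) : Set (Finset ℕ) :=
  {A | A ⊆ S ∧ ∀ i : ℕ, (i ∈ A ∧ Even i) ↔ (i + 1 ∈ A ∧ Odd (i + 1))}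

/-- `P^{oe}(S) = {A ⊆ S : i ∈ A and i odd ⟺ i+1 ∈ A and i+1 even}`. -/
def Poe (S : Finset ℕ) : Set (Finset ℕ) :=
  {A | A ⊆ S ∧ ∀ i : ℕ, (i ∈ A ∧ Odd i) ↔ (i + 1 ∈ A ∧ Even (i + 1))}

/-- `A₁ = A ∩ [2l_r − 1]`. -/
def part₁ (lr : ℕ) (A : Finset ℕ) : Finset ℕ := A.filter (· ≤ 2 * lr - 1)

/-- `A₂ = A ∩ ([2l_r + 2c₀ − 2] \ [2l_r])`. -/
def part₂ (lr c₀ : ℕ) (A : Finset ℕ) : Finset ℕ :=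
  A.filter fun i => 2 * lr + 1 ≤ i ∧ i ≤ 2 * lr + 2 * c₀ - 2

/-- `A₃ = A \ [2l_r + 2c₀ − 1]`. -/
def part₃ (lr c₀ : ℕ) (A : Finset ℕ) : Finset ℕ :=
  A.filter fun i => 2 * lr + 2 * c₀ - 1 < i

/-- `ι₁(A) = (A₁−1) ∪ (A₂−1) ∪ {2l_r+2c₀−3, 2l_r+2c₀−2} ∪ (A₃+1)`. -/
def iota₁ (lr c₀ : ℕ) (A : Finset ℕ) : Finset ℕ :=
  (part₁ lr A).image (· - 1) ∪ (part₂ lr c₀ A).image (· - 1)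
    ∪ {2 * lr + 2 * c₀ - 3, 2 * lr + 2 * c₀ - 2} ∪ (part₃ lr c₀ A).image (· + 1)

/-- `ι₂(A) = (A₁−1) ∪ (A₂−1) ∪ (A₃+1)`. -/
def iota₂ (lr c₀ : ℕ) (A : Finset ℕ) : Finset ℕ :=
  (part₁ lr A).image (· - 1) ∪ (part₂ lr c₀ A).image (· - 1)
    ∪ (part₃ lr c₀ A).image (· + 1)

private lemma getD_replicate' {n k : ℕ} (h : n < k) : (List.replicate k 1).getD n 0 = 1 := by
  simp [List.getD_eq_getElem?_getD, List.getElem?_replicate, h]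

private lemma lenA : ∀ (as : List ℕ), (∀ a ∈ as, 0 < a) →
    ((as.map fun a => List.replicate (2 * a - 1) 1 ++ [2]).flatten).length = 2 * as.sum := by
  intro as
  induction as with
  | nil => simp
  | cons a t ih =>
    intro h
    have ha : 0 < a := h a (by simp)
    have ht := ih (fun x hx => h x (by simp [hx]))
    simp only [List.map_cons, List.flatten_cons, List.length_append, ht, List.length_replicate,
      List.length_cons, List.length_nil, List.sum_cons]
    omega

private lemma lenB : ∀ (bs : List ℕ), (∀ b ∈ bs, 0 < b) →
    ((bs.map fun b => 2 :: List.replicate (2 * b - 1) 1).flatten).length = 2 * bs.sum := by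
  intro bs
  induction bs with
  | nil => simp
  | cons b t ih =>
    intro h
    have hb : 0 < b := h b (by simp)
    have ht := ih (fun x hx => h x (by simp [hx]))
    simp only [List.map_cons, List.flatten_cons, List.length_append, ht, List.length_replicate,
      List.length_cons, List.sum_cons]
    omega

private lemma getA_even : ∀ (as : List ℕ), (∀ a ∈ as, 0 < a) → ∀ n, n % 2 = 0 → n < 2 * as.sum →
    ((as.map fun a => List.replicate (2 * a - 1) 1 ++ [2]).flatten).getD n 0 = 1 := by
  intro as
  induction as with
  | nil => intro _ n _ hn; simp at hn
  | cons a t ih =>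
    intro h n hpar hn
    have ha : 0 < a := h a (by simp)
    have hblock : (List.replicate (2 * a - 1) 1 ++ [2]).length = 2 * a := by
      simp; omega
    simp only [List.map_cons, List.flatten_cons, List.sum_cons] at *
    by_cases hcase : n < 2 * a - 1
    · rw [List.getD_append _ _ _ _ (by omega)]
      rw [List.getD_append _ _ _ _ (by simpa using hcase)]
      exact getD_replicate' hcase
    · have h2a : 2 * a ≤ n := by omega
      rw [List.getD_append_right _ _ _ _ (by omega), hblock]
      exact ih (fun x hx => h x (by simp [hx])) _ (by omega) (by omega)

private lemma getA_last : ∀ (as : List ℕ), (∀ a ∈ as, 0 < a) → 0 < as.sum →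
    ((as.map fun a => List.replicate (2 * a - 1) 1 ++ [2]).flatten).getD (2 * as.sum - 1) 0 = 2 := by
  intro as
  induction as with
  | nil => intro _ hs; simp at hs
  | cons a t ih =>
    intro h hs
    have ha : 0 < a := h a (by simp)
    have hblock : (List.replicate (2 * a - 1) 1 ++ [2]).length = 2 * a := by
      simp; omega
    simp only [List.map_cons, List.flatten_cons, List.sum_cons] at *
    by_cases ht : t.sum = 0
    · have hidx : 2 * (a + t.sum) - 1 = 2 * a - 1 := by omega
      rw [hidx, List.getD_append _ _ _ _ (by omega),
        List.getD_append_right _ _ _ _ (by simp)]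
      simp
    · rw [List.getD_append_right _ _ _ _ (by omega), hblock]
      have : 2 * (a + t.sum) - 1 - 2 * a = 2 * t.sum - 1 := by omega
      rw [this]
      exact ih (fun x hx => h x (by simp [hx])) (by omega)

private lemma getB_zero : ∀ (bs : List ℕ), bs ≠ [] →
    ((bs.map fun b => 2 :: List.replicate (2 * b - 1) 1).flatten).getD 0 0 = 2 := by
  intro bs h
  cases bs with
  | nil => exact absurd rfl h
  | cons b t => simp

private lemma getB_odd : ∀ (bs : List ℕ), (∀ b ∈ bs, 0 < b) → ∀ n, n % 2 = 1 → n < 2 * bs.sum →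
    ((bs.map fun b => 2 :: List.replicate (2 * b - 1) 1).flatten).getD n 0 = 1 := by
  intro bs
  induction bs with
  | nil => intro _ n _ hn; simp at hn
  | cons b t ih =>
    intro h n hpar hn
    have hb : 0 < b := h b (by simp)
    have hblock : (2 :: List.replicate (2 * b - 1) 1).length = 2 * b := by
      simp; omega
    simp only [List.map_cons, List.flatten_cons, List.sum_cons] at *
    by_cases hcase : n < 2 * b
    · rw [List.getD_append _ _ _ _ (by omega)]
      have hn1 : n = (n - 1) + 1 := by omega
      rw [hn1, List.getD_cons_succ]
      exact getD_replicate' (by omega)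
    · rw [List.getD_append_right _ _ _ _ (by omega), hblock]
      exact ih (fun x hx => h x (by simp [hx])) _ (by omega) (by omega)

private structure Ctx (lr c₀ T : ℕ) (S : Finset ℕ) : Prop where
  hc : 2 ≤ c₀
  hsub : ∀ i ∈ S, 1 ≤ i ∧ i ≤ T
  hTeven : T % 2 = 0
  hTge : 2 * lr + 2 * c₀ - 2 ≤ T
  hM : 2 * lr ∉ S
  hMC1 : 2 * lr + 2 * c₀ - 1 ∉ S
  hodd : ∀ i, i % 2 = 1 → i ≤ 2 * lr → i ∈ S
  hmid : ∀ i, 2 * lr + 1 ≤ i → i ≤ 2 * lr + 2 * c₀ - 2 → i ∈ S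
  hright : ∀ i, i % 2 = 0 → 2 * lr + 2 * c₀ ≤ i → i ≤ T → i ∈ S

private lemma mem_S_iff (cs : List ℕ) (i : ℕ) :
    i ∈ idxOne cs ↔ 1 ≤ i ∧ i ≤ cs.length ∧ cs.getD (i - 1) 0 = 1 := by
  simp [idxOne, Finset.mem_filter, Finset.mem_Icc, and_assoc]

private lemma lenC (as bs : List ℕ) (c₀ : ℕ) (ha : ∀ a ∈ as, 0 < a) (hb : ∀ b ∈ bs, 0 < b) :
    (tupleC as bs c₀).length = 2 * as.sum + (2 * c₀ - 2) + 2 * bs.sum := by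
  simp [tupleC, lenA as ha, lenB bs hb]; omega

private lemma ctx_of (as bs : List ℕ) (c₀ : ℕ)
    (ha : ∀ a ∈ as, 0 < a) (hb : ∀ b ∈ bs, 0 < b) (hc : 1 < c₀) :
    Ctx as.sum c₀ (2 * as.sum + (2 * c₀ - 2) + 2 * bs.sum) (idxOne (tupleC as bs c₀)) := by
  set M := 2 * as.sum with hM
  set C := 2 * c₀ - 2 with hC
  have hlA : ((as.map fun a => List.replicate (2 * a - 1) 1 ++ [2]).flatten).length = M :=
    lenA as ha
  have hlB : ((bs.map fun b => 2 :: List.replicate (2 * b - 1) 1).flatten).length = 2 * bs.sum :=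
    lenB bs hb
  have hlen := lenC as bs c₀ ha hb
  have hlAM : ((as.map fun a => List.replicate (2 * a - 1) 1 ++ [2]).flatten
      ++ List.replicate (2 * c₀ - 2) 1).length = M + C := by
    simp [hlA, hC]
  constructor
  · exact hc
  · intro i hi
    rw [mem_S_iff] at hi
    omega
  · omega
  · omega
  · -- 2 * as.sum ∉ S
    intro hmem
    rw [mem_S_iff] at hmem
    obtain ⟨h1, h2, h3⟩ := hmem
    have hs : 0 < as.sum := by omega
    rw [tupleC, List.getD_append _ _ _ _ (by rw [hlAM]; omega),
      List.getD_append _ _ _ _ (by rw [hlA]; omega)] at h3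
    rw [getA_last as ha hs] at h3
    omega
  · -- M + 2c₀ - 1 ∉ S
    intro hmem
    rw [mem_S_iff] at hmem
    obtain ⟨h1, h2, h3⟩ := hmem
    rw [hlen] at h2
    have hbs : bs ≠ [] := by
      intro hnil
      rw [hnil] at h2; simp at h2; omega
    rw [tupleC, List.getD_append_right _ _ _ _ (by rw [hlAM]; omega)] at h3
    have hidx : 2 * as.sum + 2 * c₀ - 1 - 1 - (M + C) = 0 := by omega
    rw [hlAM, hidx, getB_zero bs hbs] at h3
    omega
  · -- odd left
    intro i hi hile
    rw [mem_S_iff]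
    refine ⟨by omega, by omega, ?_⟩
    rw [tupleC, List.getD_append _ _ _ _ (by rw [hlAM]; omega),
      List.getD_append _ _ _ _ (by rw [hlA]; omega)]
    exact getA_even as ha _ (by omega) (by omega)
  · -- middle
    intro i h1 h2
    rw [mem_S_iff]
    refine ⟨by omega, by omega, ?_⟩
    rw [tupleC, List.getD_append _ _ _ _ (by rw [hlAM]; omega),
      List.getD_append_right _ _ _ _ (by rw [hlA]; omega), hlA]
    exact getD_replicate' (by omega)
  · -- right
    intro i hpar h1 h2
    rw [mem_S_iff]
    refine ⟨by omega, by omega, ?_⟩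
    rw [tupleC, List.getD_append_right _ _ _ _ (by rw [hlAM]; omega), hlAM]
    exact getB_odd bs hb _ (by omega) (by omega)

private lemma mem_Peo_iff {S A : Finset ℕ} :
    A ∈ Peo S ↔ A ⊆ S ∧ ∀ i, i % 2 = 0 → (i ∈ A ↔ i + 1 ∈ A) := by
  unfold Peo
  simp only [Set.mem_setOf_eq, Nat.even_iff, Nat.odd_iff]
  constructor
  · rintro ⟨h1, h2⟩
    refine ⟨h1, fun i hi => ?_⟩
    constructor
    · intro hm; exact ((h2 i).mp ⟨hm, hi⟩).1
    · intro hm; exact ((h2 i).mpr ⟨hm, by omega⟩).1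
  · rintro ⟨h1, h2⟩
    refine ⟨h1, fun i => ?_⟩
    constructor
    · rintro ⟨hm, hi⟩; exact ⟨(h2 i hi).mp hm, by omega⟩
    · rintro ⟨hm, hi⟩
      have hi' : i % 2 = 0 := by omega
      exact ⟨(h2 i hi').mpr hm, hi'⟩

private lemma mem_Poe_iff {S B : Finset ℕ} :
    B ∈ Poe S ↔ B ⊆ S ∧ ∀ i, i % 2 = 1 → (i ∈ B ↔ i + 1 ∈ B) := by
  unfold Poe
  simp only [Set.mem_setOf_eq, Nat.even_iff, Nat.odd_iff]
  constructor
  · rintro ⟨h1, h2⟩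
    refine ⟨h1, fun i hi => ?_⟩
    constructor
    · intro hm; exact ((h2 i).mp ⟨hm, hi⟩).1
    · intro hm; exact ((h2 i).mpr ⟨hm, by omega⟩).1
  · rintro ⟨h1, h2⟩
    refine ⟨h1, fun i => ?_⟩
    constructor
    · rintro ⟨hm, hi⟩; exact ⟨(h2 i hi).mp hm, by omega⟩
    · rintro ⟨hm, hi⟩
      have hi' : i % 2 = 1 := by omega
      exact ⟨(h2 i hi').mpr hm, hi'⟩

private lemma mem_iota₂ {lr c₀ : ℕ} {A : Finset ℕ} (hc : 2 ≤ c₀) (h0 : 0 ∉ A) (i : ℕ) :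
    i ∈ iota₂ lr c₀ A ↔
      (i + 1 ∈ A ∧ i + 2 ≤ 2 * lr) ∨
      (i + 1 ∈ A ∧ 2 * lr + 1 ≤ i + 1 ∧ i + 1 ≤ 2 * lr + 2 * c₀ - 2) ∨
      (2 * lr + 2 * c₀ + 1 ≤ i ∧ i - 1 ∈ A) := by
  simp only [iota₂, part₁, part₂, part₃, Finset.mem_union, Finset.mem_image, Finset.mem_filter]
  constructor
  · rintro ((⟨x, ⟨hx, hle⟩, rfl⟩ | ⟨x, ⟨hx, h1, h2⟩, rfl⟩) | ⟨x, ⟨hx, hgt⟩, rfl⟩)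
    · have hx1 : 1 ≤ x := by
        rcases Nat.eq_zero_or_pos x with h | h
        · exact absurd (h ▸ hx) h0
        · exact h
      have hxx : x - 1 + 1 = x := by omega
      exact Or.inl ⟨by rw [hxx]; exact hx, by omega⟩
    · have hx1 : 1 ≤ x := by omega
      have hxx : x - 1 + 1 = x := by omega
      exact Or.inr (Or.inl ⟨by rw [hxx]; exact hx, by omega, by omega⟩)
    · have hxx : x + 1 - 1 = x := by omega
      exact Or.inr (Or.inr ⟨by omega, by rw [hxx]; exact hx⟩)
  · rintro (⟨h1, h2⟩ | ⟨h1, h2, h3⟩ | ⟨h1, h2⟩)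
    · exact Or.inl (Or.inl ⟨i + 1, ⟨h1, by omega⟩, by omega⟩)
    · exact Or.inl (Or.inr ⟨i + 1, ⟨h1, by omega, by omega⟩, by omega⟩)
    · exact Or.inr ⟨i - 1, ⟨h2, by omega⟩, by omega⟩

private lemma iota₁_eq (lr c₀ : ℕ) (A : Finset ℕ) :
    iota₁ lr c₀ A = iota₂ lr c₀ A ∪ {2 * lr + 2 * c₀ - 3, 2 * lr + 2 * c₀ - 2} := by
  ext i
  simp only [iota₁, iota₂, Finset.mem_union, Finset.mem_insert, Finset.mem_singleton]
  tauto

private def psiFun (lr c₀ : ℕ) (B : Finset ℕ) : Finset ℕ :=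
  (B.filter (· ≤ 2 * lr + 2 * c₀ - 4)).image (· + 1) ∪
    (B.filter fun x => 2 * lr + 2 * c₀ + 1 ≤ x).image (· - 1)

private lemma mem_psi {lr c₀ : ℕ} {B : Finset ℕ} (hc : 2 ≤ c₀) (i : ℕ) :
    i ∈ psiFun lr c₀ B ↔
      (1 ≤ i ∧ i - 1 ∈ B ∧ i ≤ 2 * lr + 2 * c₀ - 3) ∨
      (i + 1 ∈ B ∧ 2 * lr + 2 * c₀ ≤ i) := by
  simp only [psiFun, Finset.mem_union, Finset.mem_image, Finset.mem_filter]
  constructor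
  · rintro (⟨x, ⟨hx, hle⟩, rfl⟩ | ⟨x, ⟨hx, hge⟩, rfl⟩)
    · exact Or.inl ⟨by omega, by simpa using hx, by omega⟩
    · have hxx : x - 1 + 1 = x := by omega
      exact Or.inr ⟨by rw [hxx]; exact hx, by omega⟩
  · rintro (⟨h1, h2, h3⟩ | ⟨h1, h2⟩)
    · exact Or.inl ⟨i - 1, ⟨h2, by omega⟩, by omega⟩
    · exact Or.inr ⟨i + 1, ⟨h1, by omega⟩, by omega⟩

section Core

variable {lr c₀ T : ℕ} {S A B : Finset ℕ}

private lemma peoA0 (ctx : Ctx lr c₀ T S) (hA : A ∈ Peo S) : 0 ∉ A := fun h =>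
  absurd ((ctx.hsub 0 (hA.1 h)).1) (by omega)

private lemma peoAM (ctx : Ctx lr c₀ T S) (hA : A ∈ Peo S) : 2 * lr ∉ A := fun h =>
  ctx.hM (hA.1 h)

private lemma peoAMC1 (ctx : Ctx lr c₀ T S) (hA : A ∈ Peo S) : 2 * lr + 2 * c₀ - 1 ∉ A :=
  fun h => ctx.hMC1 (hA.1 h)

private lemma peoAMC (ctx : Ctx lr c₀ T S) (hA : A ∈ Peo S) : 2 * lr + 2 * c₀ - 2 ∉ A := by
  intro h
  have hc := ctx.hc
  have h2 := (mem_Peo_iff.mp hA).2 (2 * lr + 2 * c₀ - 2) (by omega)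
  have := h2.mp h
  rw [show 2 * lr + 2 * c₀ - 2 + 1 = 2 * lr + 2 * c₀ - 1 by omega] at this
  exact peoAMC1 ctx hA this

private lemma poeB0 (ctx : Ctx lr c₀ T S) (hB : B ∈ Poe S) : 0 ∉ B := fun h =>
  absurd ((ctx.hsub 0 (hB.1 h)).1) (by omega)

private lemma poeBM (ctx : Ctx lr c₀ T S) (hB : B ∈ Poe S) : 2 * lr ∉ B := fun h =>
  ctx.hM (hB.1 h)

private lemma poeBM1 (ctx : Ctx lr c₀ T S) (hB : B ∈ Poe S) : 2 * lr - 1 ∉ B := by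
  intro h
  have h1 := (ctx.hsub _ (hB.1 h)).1
  have h2 := (mem_Poe_iff.mp hB).2 (2 * lr - 1) (by omega)
  have := h2.mp h
  rw [show 2 * lr - 1 + 1 = 2 * lr by omega] at this
  exact poeBM ctx hB this

private lemma poeBMC1 (ctx : Ctx lr c₀ T S) (hB : B ∈ Poe S) : 2 * lr + 2 * c₀ - 1 ∉ B :=
  fun h => ctx.hMC1 (hB.1 h)

private lemma poeBMC2 (ctx : Ctx lr c₀ T S) (hB : B ∈ Poe S) : 2 * lr + 2 * c₀ ∉ B := by
  intro h
  have hc := ctx.hc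
  have h2 := (mem_Poe_iff.mp hB).2 (2 * lr + 2 * c₀ - 1) (by omega)
  have := h2.mpr (by rwa [show 2 * lr + 2 * c₀ - 1 + 1 = 2 * lr + 2 * c₀ by omega])
  exact poeBMC1 ctx hB this

private lemma poePairB (ctx : Ctx lr c₀ T S) (hB : B ∈ Poe S) :
    2 * lr + 2 * c₀ - 3 ∈ B ↔ 2 * lr + 2 * c₀ - 2 ∈ B := by
  have hc := ctx.hc
  have h2 := (mem_Poe_iff.mp hB).2 (2 * lr + 2 * c₀ - 3) (by omega)
  rwa [show 2 * lr + 2 * c₀ - 3 + 1 = 2 * lr + 2 * c₀ - 2 by omega] at h2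

private lemma iota₂_subset (ctx : Ctx lr c₀ T S) (hA : A ∈ Peo S) :
    iota₂ lr c₀ A ⊆ S := by
  have hc := ctx.hc
  have h0 := peoA0 ctx hA
  have hpair := (mem_Peo_iff.mp hA).2
  intro i hi
  rw [mem_iota₂ hc h0] at hi
  rcases hi with ⟨h1, h2⟩ | ⟨h1, h2, h3⟩ | ⟨h1, h2⟩
  · by_cases hp : i % 2 = 1
    · exact ctx.hodd i hp (by omega)
    · exact hA.1 ((hpair i (by omega)).mpr h1)
  · by_cases hi2 : i = 2 * lr
    · exfalso
      have := (hpair (2 * lr) (by omega)).mpr (by rwa [hi2] at h1)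
      exact peoAM ctx hA this
    · exact ctx.hmid i (by omega) (by omega)
  · by_cases hp : i % 2 = 0
    · have hle := (ctx.hsub _ (hA.1 h2)).2
      have hTe := ctx.hTeven
      exact ctx.hright i hp (by omega) (by omega)
    · have := (hpair (i - 1) (by omega)).mp h2
      rw [show i - 1 + 1 = i by omega] at this
      exact hA.1 this

private lemma iota₂_mem_Poe (ctx : Ctx lr c₀ T S) (hA : A ∈ Peo S) :
    iota₂ lr c₀ A ∈ Poe S := by
  have hc := ctx.hc
  have h0 := peoA0 ctx hA
  have hpair := (mem_Peo_iff.mp hA).2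
  rw [mem_Poe_iff]
  refine ⟨iota₂_subset ctx hA, fun i hi => ?_⟩
  rw [mem_iota₂ hc h0, mem_iota₂ hc h0]
  constructor
  · rintro (⟨h1, h2⟩ | ⟨h1, h2, h3⟩ | ⟨h1, h2⟩)
    · have := (hpair (i + 1) (by omega)).mp h1
      rw [show i + 1 + 1 = i + 2 by omega] at this
      exact Or.inl ⟨this, by omega⟩
    · have h4 : i + 1 ≠ 2 * lr + 2 * c₀ - 2 := by
        intro he; exact peoAMC ctx hA (he ▸ h1)
      have := (hpair (i + 1) (by omega)).mp h1
      rw [show i + 1 + 1 = i + 2 by omega] at this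
      exact Or.inr (Or.inl ⟨this, by omega, by omega⟩)
    · have := (hpair (i - 1) (by omega)).mp h2
      rw [show i - 1 + 1 = i by omega] at this
      exact Or.inr (Or.inr ⟨by omega, by rwa [show i + 1 - 1 = i by omega]⟩)
  · rintro (⟨h1, h2⟩ | ⟨h1, h2, h3⟩ | ⟨h1, h2⟩)
    · rw [show i + 1 + 1 = i + 2 by omega] at h1
      have := (hpair (i + 1) (by omega)).mpr h1
      exact Or.inl ⟨this, by omega⟩
    · rw [show i + 1 + 1 = i + 2 by omega] at h1
      have hmem := (hpair (i + 1) (by omega)).mpr h1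
      have h4 : i + 1 ≠ 2 * lr := by
        intro he; exact peoAM ctx hA (he ▸ hmem)
      exact Or.inr (Or.inl ⟨hmem, by omega, by omega⟩)
    · rw [show i + 1 - 1 = i by omega] at h2
      have hge : 2 * lr + 2 * c₀ + 1 ≤ i := by omega
      have := (hpair (i - 1) (by omega)).mpr (by rwa [show i - 1 + 1 = i by omega])
      exact Or.inr (Or.inr ⟨hge, this⟩)

private lemma notK_iota₂ (ctx : Ctx lr c₀ T S) (hA : A ∈ Peo S) :
    2 * lr + 2 * c₀ - 3 ∉ iota₂ lr c₀ A := by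
  have hc := ctx.hc
  rw [mem_iota₂ hc (peoA0 ctx hA)]
  rintro (⟨h1, h2⟩ | ⟨h1, h2, h3⟩ | ⟨h1, h2⟩)
  · omega
  · rw [show 2 * lr + 2 * c₀ - 3 + 1 = 2 * lr + 2 * c₀ - 2 by omega] at h1
    exact peoAMC ctx hA h1
  · omega

private lemma notK1_iota₂ (ctx : Ctx lr c₀ T S) (hA : A ∈ Peo S) :
    2 * lr + 2 * c₀ - 2 ∉ iota₂ lr c₀ A := by
  have hc := ctx.hc
  rw [mem_iota₂ hc (peoA0 ctx hA)]
  rintro (⟨h1, h2⟩ | ⟨h1, h2, h3⟩ | ⟨h1, h2⟩)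
  · omega
  · rw [show 2 * lr + 2 * c₀ - 2 + 1 = 2 * lr + 2 * c₀ - 1 by omega] at h1
    exact peoAMC1 ctx hA h1
  · omega

private lemma iota₁_mem_Poe (ctx : Ctx lr c₀ T S) (hA : A ∈ Peo S) :
    iota₁ lr c₀ A ∈ Poe S := by
  have hc := ctx.hc
  have hmem := iota₂_mem_Poe ctx hA
  have hpair := (mem_Poe_iff.mp hmem).2
  rw [mem_Poe_iff]
  constructor
  · rw [iota₁_eq]
    intro i hi
    rcases Finset.mem_union.mp hi with h | h
    · exact iota₂_subset ctx hA h
    · rcases Finset.mem_insert.mp h with h | h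
      · exact h ▸ ctx.hmid _ (by omega) (by omega)
      · rw [Finset.mem_singleton] at h
        exact h ▸ ctx.hmid _ (by omega) (by omega)
  · intro i hi
    rw [iota₁_eq]
    simp only [Finset.mem_union, Finset.mem_insert, Finset.mem_singleton]
    constructor
    · rintro (h | h | h)
      · exact Or.inl ((hpair i hi).mp h)
      · exact Or.inr (Or.inr (by omega))
      · omega
    · rintro (h | h | h)
      · exact Or.inl ((hpair i hi).mpr h)
      · omega
      · exact Or.inr (Or.inl (by omega))

end Core

section Core2

variable {lr c₀ T : ℕ} {S A B : Finset ℕ}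

private lemma recover_low (ctx : Ctx lr c₀ T S) (hA : A ∈ Peo S) {j : ℕ}
    (h1 : 1 ≤ j) (h2 : j ≤ 2 * lr + 2 * c₀ - 2) (h3 : j ≠ 2 * lr) :
    j ∈ A ↔ j - 1 ∈ iota₂ lr c₀ A := by
  have hc := ctx.hc
  rw [mem_iota₂ hc (peoA0 ctx hA)]
  rw [show j - 1 + 1 = j by omega]
  constructor
  · intro h
    by_cases hcase : j + 1 ≤ 2 * lr
    · exact Or.inl ⟨h, by omega⟩
    · exact Or.inr (Or.inl ⟨h, by omega, by omega⟩)
  · rintro (⟨h, _⟩ | ⟨h, _, _⟩ | ⟨h, _⟩) <;> first | exact h | omega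

private lemma recover_high (ctx : Ctx lr c₀ T S) (hA : A ∈ Peo S) {j : ℕ}
    (h1 : 2 * lr + 2 * c₀ ≤ j) :
    j ∈ A ↔ j + 1 ∈ iota₂ lr c₀ A := by
  have hc := ctx.hc
  rw [mem_iota₂ hc (peoA0 ctx hA)]
  rw [show j + 1 - 1 = j by omega]
  constructor
  · intro h
    exact Or.inr (Or.inr ⟨by omega, h⟩)
  · rintro (⟨h, hb⟩ | ⟨h, hb, hb'⟩ | ⟨hb, h⟩) <;> first | exact h | omega

private lemma iota₂_inj (ctx : Ctx lr c₀ T S) {A A' : Finset ℕ}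
    (hA : A ∈ Peo S) (hA' : A' ∈ Peo S) (h : iota₂ lr c₀ A = iota₂ lr c₀ A') : A = A' := by
  have hc := ctx.hc
  ext j
  by_cases hj0 : j = 0
  · subst hj0
    simp [peoA0 ctx hA, peoA0 ctx hA']
  by_cases hjM : j = 2 * lr
  · subst hjM
    simp [peoAM ctx hA, peoAM ctx hA']
  by_cases hjE : j = 2 * lr + 2 * c₀ - 1
  · subst hjE
    simp [peoAMC1 ctx hA, peoAMC1 ctx hA']
  by_cases hlow : j ≤ 2 * lr + 2 * c₀ - 2
  · rw [recover_low ctx hA (by omega) hlow hjM, recover_low ctx hA' (by omega) hlow hjM, h]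
  · rw [recover_high ctx hA (by omega), recover_high ctx hA' (by omega), h]

private lemma psi_subset (ctx : Ctx lr c₀ T S) (hB : B ∈ Poe S) :
    psiFun lr c₀ B ⊆ S := by
  have hc := ctx.hc
  have hpair := (mem_Poe_iff.mp hB).2
  intro i hi
  rw [mem_psi hc] at hi
  rcases hi with ⟨h1, h2, h3⟩ | ⟨h1, h2⟩
  · by_cases hge : 2 * lr + 1 ≤ i
    · exact ctx.hmid i hge (by omega)
    · by_cases hp : i % 2 = 1
      · exact ctx.hodd i hp (by omega)
      · have := (hpair (i - 1) (by omega)).mp h2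
        rw [show i - 1 + 1 = i by omega] at this
        exact hB.1 this
  · by_cases hp : i % 2 = 0
    · have hle := (ctx.hsub _ (hB.1 h1)).2
      exact ctx.hright i hp h2 (by omega)
    · exact hB.1 ((hpair i (by omega)).mpr h1)

private lemma psi_mem_Peo (ctx : Ctx lr c₀ T S) (hB : B ∈ Poe S) :
    psiFun lr c₀ B ∈ Peo S := by
  have hc := ctx.hc
  have hpair := (mem_Poe_iff.mp hB).2
  have h0B := poeB0 ctx hB
  rw [mem_Peo_iff]
  refine ⟨psi_subset ctx hB, fun i hi => ?_⟩
  rw [mem_psi hc, mem_psi hc]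
  constructor
  · rintro (⟨h1, h2, h3⟩ | ⟨h1, h2⟩)
    · have := (hpair (i - 1) (by omega)).mp h2
      rw [show i - 1 + 1 = i by omega] at this
      refine Or.inl ⟨by omega, by simpa using this, by omega⟩
    · have := (hpair (i + 1) (by omega)).mp h1
      rw [show i + 1 + 1 = i + 2 by omega] at this
      exact Or.inr ⟨this, by omega⟩
  · rintro (⟨h1, h2, h3⟩ | ⟨h1, h2⟩)
    · simp only [show i + 1 - 1 = i from rfl] at h2
      have hi1 : 1 ≤ i := by
        rcases Nat.eq_zero_or_pos i with h | h
        · exact absurd (h ▸ h2) h0B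
        · exact h
      have := (hpair (i - 1) (by omega)).mpr (by rwa [show i - 1 + 1 = i by omega])
      exact Or.inl ⟨hi1, this, by omega⟩
    · rw [show i + 1 + 1 = i + 2 by omega] at h1
      have := (hpair (i + 1) (by omega)).mpr h1
      exact Or.inr ⟨this, by omega⟩

private lemma psi0 (ctx : Ctx lr c₀ T S) (hB : B ∈ Poe S) : 0 ∉ psiFun lr c₀ B := by
  have hc := ctx.hc
  rw [mem_psi hc]
  rintro (⟨h1, _, _⟩ | ⟨_, h2⟩) <;> omega

private lemma mem_iota₂_psi (ctx : Ctx lr c₀ T S) (hB : B ∈ Poe S) (i : ℕ) :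
    i ∈ iota₂ lr c₀ (psiFun lr c₀ B) ↔
      i ∈ B ∧ i ≠ 2 * lr + 2 * c₀ - 3 ∧ i ≠ 2 * lr + 2 * c₀ - 2 := by
  have hc := ctx.hc
  rw [mem_iota₂ hc (psi0 ctx hB)]
  simp only [mem_psi hc]
  constructor
  · rintro (⟨(⟨g1, g2, g3⟩ | ⟨g1, g2⟩), h2⟩ | ⟨(⟨g1, g2, g3⟩ | ⟨g1, g2⟩), h2, h3⟩ |
      ⟨h1, (⟨g1, g2, g3⟩ | ⟨g1, g2⟩)⟩)
    · simp only [show i + 1 - 1 = i from rfl] at g2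
      exact ⟨g2, by omega, by omega⟩
    · omega
    · simp only [show i + 1 - 1 = i from rfl] at g2
      exact ⟨g2, by omega, by omega⟩
    · omega
    · omega
    · rw [show i - 1 + 1 = i by omega] at g1
      exact ⟨g1, by omega, by omega⟩
  · rintro ⟨hiB, hne1, hne2⟩
    have hi1 : 1 ≤ i := (ctx.hsub _ (hB.1 hiB)).1
    have hf1 : i ≠ 2 * lr - 1 := fun h => poeBM1 ctx hB (h ▸ hiB)
    have hf2 : i ≠ 2 * lr := fun h => poeBM ctx hB (h ▸ hiB)
    have hf3 : i ≠ 2 * lr + 2 * c₀ - 1 := fun h => poeBMC1 ctx hB (h ▸ hiB)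
    have hf4 : i ≠ 2 * lr + 2 * c₀ := fun h => poeBMC2 ctx hB (h ▸ hiB)
    by_cases hc1 : i + 2 ≤ 2 * lr
    · exact Or.inl ⟨Or.inl ⟨by omega, by simpa using hiB, by omega⟩, by omega⟩
    · by_cases hc2 : i ≤ 2 * lr + 2 * c₀ - 4
      · exact Or.inr (Or.inl ⟨Or.inl ⟨by omega, by simpa using hiB, by omega⟩,
          by omega, by omega⟩)
      · refine Or.inr (Or.inr ⟨by omega, Or.inr ⟨by rwa [show i - 1 + 1 = i by omega],
          by omega⟩⟩)

private lemma final₂ (ctx : Ctx lr c₀ T S) (hB : B ∈ Poe S)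
    (hK : 2 * lr + 2 * c₀ - 3 ∉ B) : iota₂ lr c₀ (psiFun lr c₀ B) = B := by
  ext i
  rw [mem_iota₂_psi ctx hB]
  constructor
  · exact fun h => h.1
  · intro h
    refine ⟨h, ?_, ?_⟩
    · intro he; exact hK (he ▸ h)
    · intro he
      exact hK ((poePairB ctx hB).mpr (he ▸ h))

private lemma final₁ (ctx : Ctx lr c₀ T S) (hB : B ∈ Poe S)
    (hK : 2 * lr + 2 * c₀ - 3 ∈ B) : iota₁ lr c₀ (psiFun lr c₀ B) = B := by
  have hK1 : 2 * lr + 2 * c₀ - 2 ∈ B := (poePairB ctx hB).mp hK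
  rw [iota₁_eq]
  ext i
  simp only [Finset.mem_union, Finset.mem_insert, Finset.mem_singleton, mem_iota₂_psi ctx hB]
  constructor
  · rintro (⟨h, _, _⟩ | h | h)
    · exact h
    · exact h ▸ hK
    · exact h ▸ hK1
  · intro h
    by_cases h1 : i = 2 * lr + 2 * c₀ - 3
    · exact Or.inr (Or.inl h1)
    · by_cases h2 : i = 2 * lr + 2 * c₀ - 2
      · exact Or.inr (Or.inr h2)
      · exact Or.inl ⟨h, h1, h2⟩

end Core2

/-- For `S = [2t]_c^1` with `c = [a₁,…,a_r; b₁,…,b_s; c₀]`, `c₀ > 1`, the map sending `A`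
in the first copy of `P^{eo}(S)` to `ι₁(A)` and `A` in the second copy to `ι₂(A)` is a
bijection from `P^{eo}(S) ⊔ P^{eo}(S)` onto `P^{oe}(S)`. -/
theorem bij_Peo_sum_Poe (as bs : List ℕ) (c₀ : ℕ)
    (ha : ∀ a ∈ as, 0 < a) (hb : ∀ b ∈ bs, 0 < b) (hc : 1 < c₀) :
    Set.BijOn (Sum.elim (iota₁ as.sum c₀) (iota₂ as.sum c₀))
      (Sum.inl '' Peo (idxOne (tupleC as bs c₀)) ∪
        Sum.inr '' Peo (idxOne (tupleC as bs c₀)))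
      (Poe (idxOne (tupleC as bs c₀))) := by
  have ctx := ctx_of as bs c₀ ha hb hc
  refine ⟨?_, ?_, ?_⟩
  · -- MapsTo
    rintro x (⟨A, hA, rfl⟩ | ⟨A, hA, rfl⟩)
    · exact iota₁_mem_Poe ctx hA
    · exact iota₂_mem_Poe ctx hA
  · -- InjOn
    rintro x (⟨A, hA, rfl⟩ | ⟨A, hA, rfl⟩) y (⟨A', hA', rfl⟩ | ⟨A', hA', rfl⟩) hxy
    · simp only [Sum.elim_inl] at hxy
      have h2 : iota₂ as.sum c₀ A = iota₂ as.sum c₀ A' := by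
        ext i
        constructor
        · intro hi
          have hmem : i ∈ iota₁ as.sum c₀ A' := by
            rw [← hxy, iota₁_eq]
            exact Finset.mem_union_left _ hi
          rw [iota₁_eq] at hmem
          rcases Finset.mem_union.mp hmem with h | h
          · exact h
          · exfalso
            rcases Finset.mem_insert.mp h with h | h
            · exact notK_iota₂ ctx hA (h ▸ hi)
            · rw [Finset.mem_singleton] at h
              exact notK1_iota₂ ctx hA (h ▸ hi)
        · intro hi
          have hmem : i ∈ iota₁ as.sum c₀ A := by
            rw [hxy, iota₁_eq]
            exact Finset.mem_union_left _ hi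
          rw [iota₁_eq] at hmem
          rcases Finset.mem_union.mp hmem with h | h
          · exact h
          · exfalso
            rcases Finset.mem_insert.mp h with h | h
            · exact notK_iota₂ ctx hA' (h ▸ hi)
            · rw [Finset.mem_singleton] at h
              exact notK1_iota₂ ctx hA' (h ▸ hi)
      rw [iota₂_inj ctx hA hA' h2]
    · exfalso
      simp only [Sum.elim_inl, Sum.elim_inr] at hxy
      have hKmem : (2 * as.sum + 2 * c₀ - 3) ∈ iota₁ as.sum c₀ A := by
        rw [iota₁_eq]
        exact Finset.mem_union_right _ (Finset.mem_insert_self _ _)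
      rw [hxy] at hKmem
      exact notK_iota₂ ctx hA' hKmem
    · exfalso
      simp only [Sum.elim_inl, Sum.elim_inr] at hxy
      have hKmem : (2 * as.sum + 2 * c₀ - 3) ∈ iota₁ as.sum c₀ A' := by
        rw [iota₁_eq]
        exact Finset.mem_union_right _ (Finset.mem_insert_self _ _)
      rw [← hxy] at hKmem
      exact notK_iota₂ ctx hA hKmem
    · simp only [Sum.elim_inr] at hxy
      rw [iota₂_inj ctx hA hA' hxy]
  · -- SurjOn
    intro B hB
    by_cases hK : 2 * as.sum + 2 * c₀ - 3 ∈ B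
    · exact ⟨Sum.inl (psiFun as.sum c₀ B),
        Or.inl ⟨psiFun as.sum c₀ B, psi_mem_Peo ctx hB, rfl⟩, final₁ ctx hB hK⟩
    · exact ⟨Sum.inr (psiFun as.sum c₀ B),
        Or.inr ⟨psiFun as.sum c₀ B, psi_mem_Peo ctx hB, rfl⟩, final₂ ctx hB hK⟩
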